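/- Let P = {x ∈ ℝⁿ : Ax = b, Bx ≤ d} and c ∈ ℝⁿ. Let x₀ ∈ P, let y be a steepest-descent augmenting direction at x₀ (y is strictly feasible at x₀, By ≠ 0, and cᵀy/‖By‖₁ ≤ cᵀz/‖Bz‖₁ for every z strictly feasible at x₀ with Bz ≠ 0) with cᵀy < 0, let α > 0 be such that x₁ := x₀ + αy ∈ P and x₀ + α'y ∉ P for all α' > α, and let y' be a steepest-descent augmenting direction at x₁. If the steepness values agree, cᵀy/‖By‖₁ = cᵀy'/‖By'‖₁, then By and By' lie in a common closed orthant of ℝ^{m_B}, i.e., (By)_i·(By')_i ≥ 0 for every index i. Equivalently, a change in orthants from By to By' implies a strict change in steepness. -/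
import Mathlib

open Finset Matrix

/-- `y` is strictly feasible at `x₀` with respect to the set `P`. -/
def StrictlyFeasible {n : ℕ} (P : Set (Fin n → ℝ)) (x₀ y : Fin n → ℝ) : Prop :=
  ∃ α : ℝ, 0 < α ∧ x₀ + α • y ∈ P

/-- `y` is a steepest-descent augmenting direction at `x₀` with respect to `P`, `B`, `c`. -/
def IsSteepestDescentDirection {n mB : ℕ} (P : Set (Fin n → ℝ))
    (B : Matrix (Fin mB) (Fin n) ℝ) (c : Fin n → ℝ) (x₀ y : Fin n → ℝ) : Prop :=
  StrictlyFeasible P x₀ y ∧ B.mulVec y ≠ 0 ∧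
    ∀ z : Fin n → ℝ, StrictlyFeasible P x₀ z → B.mulVec z ≠ 0 →
      c ⬝ᵥ y / (∑ i, |B.mulVec y i|) ≤ c ⬝ᵥ z / (∑ i, |B.mulVec z i|)

lemma aux_sum_abs_pos {m : ℕ} (v : Fin m → ℝ) (hv : v ≠ 0) : 0 < ∑ i, |v i| := by
  obtain ⟨i, hi⟩ := Function.ne_iff.mp hv
  have h0 : 0 < |v i| := abs_pos.mpr hi
  exact lt_of_lt_of_le h0 (Finset.single_le_sum (f := fun j => |v j|)
    (fun j _ => abs_nonneg _) (Finset.mem_univ i))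

lemma aux_abs_add (a b : ℝ) (h : |a + b| = |a| + |b|) : 0 ≤ a * b := by
  rcases abs_cases a with ⟨h1, h2⟩ | ⟨h1, h2⟩ <;>
    rcases abs_cases b with ⟨h3, h4⟩ | ⟨h3, h4⟩ <;>
      rcases abs_cases (a + b) with ⟨h5, h6⟩ | ⟨h5, h6⟩ <;> nlinarith

/-- If consecutive steepest-descent directions have equal steepness, then
`B y` and `B y'` lie in a common closed orthant; equivalently, a change in orthants implies
a strict change in steepness. -/
theorem equal_steepness_same_orthant
    (n mA mB : ℕ) (A : Matrix (Fin mA) (Fin n) ℝ) (B : Matrix (Fin mB) (Fin n) ℝ)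
    (b : Fin mA → ℝ) (d : Fin mB → ℝ) (c : Fin n → ℝ)
    (P : Set (Fin n → ℝ))
    (hP : P = {x | A.mulVec x = b ∧ ∀ i, B.mulVec x i ≤ d i})
    (x₀ : Fin n → ℝ) (hx₀ : x₀ ∈ P)
    (y : Fin n → ℝ) (hy : IsSteepestDescentDirection P B c x₀ y)
    (hcy : c ⬝ᵥ y < 0)
    (α : ℝ) (hα : 0 < α)
    (x₁ : Fin n → ℝ) (hx₁ : x₁ = x₀ + α • y)
    (hx₁P : x₁ ∈ P)
    (hmax : ∀ α' : ℝ, α < α' → x₀ + α' • y ∉ P)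
    (y' : Fin n → ℝ) (hy' : IsSteepestDescentDirection P B c x₁ y')
    (heq : c ⬝ᵥ y / (∑ i, |B.mulVec y i|) = c ⬝ᵥ y' / (∑ i, |B.mulVec y' i|)) :
    ∀ i, B.mulVec y i * B.mulVec y' i ≥ 0 := by
  subst hx₁
  obtain ⟨hfy, hBy, hmin⟩ := hy
  obtain ⟨hfy', hBy', hmin'⟩ := hy'
  obtain ⟨β, hβ, hβP⟩ := hfy'
  have hSpos : 0 < ∑ i, |B.mulVec y i| := aux_sum_abs_pos _ hBy
  have hS'pos : 0 < ∑ i, |B.mulVec y' i| := aux_sum_abs_pos _ hBy'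
  set S := ∑ i, |B.mulVec y i| with hSdef
  set S' := ∑ i, |B.mulVec y' i| with hS'def
  set s := c ⬝ᵥ y / S with hsdef
  have hs : s < 0 := div_neg_of_neg_of_pos hcy hSpos
  have hcyS : c ⬝ᵥ y = s * S := (div_eq_iff hSpos.ne').mp hsdef.symm
  have hcy'S : c ⬝ᵥ y' = s * S' := by
    have : c ⬝ᵥ y' / S' = s := heq.symm
    exact (div_eq_iff hS'pos.ne').mp this
  -- membership facts
  have hmx₀ : A.mulVec x₀ = b ∧ ∀ i, B.mulVec x₀ i ≤ d i := by rw [hP] at hx₀; exact hx₀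
  have hmx₁ : A.mulVec (x₀ + α • y) = b ∧ ∀ i, B.mulVec (x₀ + α • y) i ≤ d i := by
    rw [hP] at hx₁P; exact hx₁P
  have hmβ : A.mulVec ((x₀ + α • y) + β • y') = b ∧
      ∀ i, B.mulVec ((x₀ + α • y) + β • y') i ≤ d i := by rw [hP] at hβP; exact hβP
  have hAy : A.mulVec y = 0 := by
    have h2 := hmx₁.1
    rw [Matrix.mulVec_add, Matrix.mulVec_smul, hmx₀.1] at h2
    have h3 : α • A.mulVec y = 0 := add_eq_left.mp h2
    rcases smul_eq_zero.mp h3 with h | h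
    · exact absurd h (ne_of_gt hα)
    · exact h
  have hAy' : A.mulVec y' = 0 := by
    have h2 := hmβ.1
    rw [Matrix.mulVec_add, Matrix.mulVec_smul, hmx₁.1] at h2
    have h3 : β • A.mulVec y' = 0 := add_eq_left.mp h2
    rcases smul_eq_zero.mp h3 with h | h
    · exact absurd h (ne_of_gt hβ)
    · exact h
  set w := α • y + β • y' with hwdef
  have hBw_i : ∀ i, B.mulVec w i = α * B.mulVec y i + β * B.mulVec y' i := by
    intro i
    simp [hwdef, Matrix.mulVec_add, Matrix.mulVec_smul]
  have hcw : c ⬝ᵥ w = s * (α * S) + s * (β * S') := by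
    simp [hwdef, dotProduct_add, dotProduct_smul, hcyS, hcy'S, smul_eq_mul]
    ring
  by_cases hw0 : B.mulVec w = 0
  · -- contradiction case
    exfalso
    have hByy' : ∀ i, α * B.mulVec y i + β * B.mulVec y' i = 0 := by
      intro i; rw [← hBw_i i, hw0]; rfl
    set z := α • y + (β + 1) • y' with hzdef
    have hBz : B.mulVec z = B.mulVec y' := by
      funext i
      have h := hByy' i
      simp only [hzdef, Matrix.mulVec_add, Matrix.mulVec_smul, Pi.add_apply, Pi.smul_apply,
        smul_eq_mul]
      linarith
    have hAz : A.mulVec z = 0 := by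
      simp [hzdef, Matrix.mulVec_add, Matrix.mulVec_smul, hAy, hAy']
    have hzfeas : StrictlyFeasible P (x₀ + α • y) z := by
      refine ⟨β, hβ, ?_⟩
      rw [hP]
      constructor
      · rw [Matrix.mulVec_add, Matrix.mulVec_smul, hmx₁.1, hAz, smul_zero, add_zero]
      · intro i
        have h := hmβ.2 i
        rw [Matrix.mulVec_add, Matrix.mulVec_smul] at h ⊢
        rw [Pi.add_apply, Pi.smul_apply, hBz] at *
        simpa using h
    have hBz0 : B.mulVec z ≠ 0 := hBz ▸ hBy'
    have hcmp := hmin' z hzfeas hBz0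
    rw [hBz] at hcmp
    have hcz : c ⬝ᵥ z = s * (α * S) + (β + 1) * (s * S') := by
      simp [hzdef, dotProduct_add, dotProduct_smul, hcyS, hcy'S, smul_eq_mul]
      ring
    rw [hcy'S, hcz, ← hS'def] at hcmp
    have hle : s * S' ≤ s * (α * S) + (β + 1) * (s * S') :=
      (div_le_div_iff_of_pos_right hS'pos).mp hcmp
    nlinarith [mul_pos hα hSpos, mul_pos hβ hS'pos]
  · -- main case
    have hwfeas : StrictlyFeasible P x₀ w := by
      refine ⟨1, one_pos, ?_⟩
      rw [one_smul, hwdef, ← add_assoc]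
      exact hβP
    have hcmp := hmin w hwfeas hw0
    set T := ∑ i, |B.mulVec w i| with hTdef
    have hTpos : 0 < T := aux_sum_abs_pos _ hw0
    rw [hcw] at hcmp
    have hsT : s * T ≤ s * (α * S) + s * (β * S') := (le_div_iff₀ hTpos).mp hcmp
    have hMT : α * S + β * S' ≤ T := by nlinarith
    have hTM : ∀ i ∈ Finset.univ,
        |B.mulVec w i| ≤ α * |B.mulVec y i| + β * |B.mulVec y' i| := by
      intro i _
      rw [hBw_i i]
      calc |α * B.mulVec y i + β * B.mulVec y' i|
          ≤ |α * B.mulVec y i| + |β * B.mulVec y' i| := abs_add_le _ _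
        _ = α * |B.mulVec y i| + β * |B.mulVec y' i| := by
            rw [abs_mul, abs_mul, abs_of_pos hα, abs_of_pos hβ]
    have hsumM : ∑ i, (α * |B.mulVec y i| + β * |B.mulVec y' i|) = α * S + β * S' := by
      rw [Finset.sum_add_distrib, ← Finset.mul_sum, ← Finset.mul_sum]
    have hsum_eq : T = ∑ i, (α * |B.mulVec y i| + β * |B.mulVec y' i|) := by
      refine le_antisymm (Finset.sum_le_sum hTM) ?_
      rw [hsumM]; exact hMT
    have hterm := (Finset.sum_eq_sum_iff_of_le hTM).mp hsum_eq
    intro i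
    have hi := hterm i (Finset.mem_univ i)
    rw [hBw_i i] at hi
    have habs : |α * B.mulVec y i + β * B.mulVec y' i|
        = |α * B.mulVec y i| + |β * B.mulVec y' i| := by
      rw [abs_mul, abs_mul, abs_of_pos hα, abs_of_pos hβ]
      exact hi
    have := aux_abs_add _ _ habs
    nlinarith [mul_pos hα hβ]
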